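/- There exists C such that for all x, y ∈ R^2 with |x| ≤ |y| and |x-y| ≥ |y|/2, Σ_{n ∈ Z^2} 1/((1+|x-n|)(1+|y-n|)(1+|n|)^2) ≤ C ln(e + |x-y|)/((1+|x|)(1+|y|)). -/

import Mathlib

open MeasureTheory Real Filter

noncomputable section

abbrev E2 := EuclideanSpace ℝ (Fin 2)

/-- The Biot–Savart kernel `K(z) = z^⊥ / (2π |z|^2)`. -/
def K (z : E2) : E2 := (1 / (2 * Real.pi * ‖z‖ ^ 2)) • (!₂[-(z 1), z 0] : E2)

/-- The unit square `Q_0 = [0,1)^2`. -/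
def Q0 : Set E2 := {y | y 0 ∈ Set.Ico (0 : ℝ) 1 ∧ y 1 ∈ Set.Ico (0 : ℝ) 1}

/-- The concentric triple `3Q_0` of the unit square (side 3, same center). -/
def threeQ0 : Set E2 := {y | y 0 ∈ Set.Icc (-1 : ℝ) 2 ∧ y 1 ∈ Set.Icc (-1 : ℝ) 2}

/-- The velocity field of the unit-square vortex patch. -/
def v (x : E2) : E2 := ∫ y in Q0, K (x - y)

/-- Embedding of the lattice `ℤ²` into the plane. -/
def latt (n : ℤ × ℤ) : E2 := (!₂[(n.1 : ℝ), (n.2 : ℝ)] : E2)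

/-- `ln⁻ t = -min{0, ln t} = max{0, -ln t}`. -/
def lnNeg (t : ℝ) : ℝ := max 0 (-Real.log t)

end

/- ### one-dimensional partial-sum bounds over ℕ -/

private lemma harm_le (M : ℕ) :
    ∑ j ∈ Finset.range M, (1:ℝ)/(1+(j:ℝ)) ≤ 1 + Real.log M := by
  induction M with
  | zero => simp
  | succ M ih =>
    rcases Nat.eq_zero_or_pos M with hM | hM
    · subst hM; norm_num
    · rw [Finset.sum_range_succ]
      have h1 : (1:ℝ) ≤ (M:ℝ) := by exact_mod_cast hM
      have hstep : (1:ℝ)/((M:ℝ)+1) ≤ Real.log ((M:ℝ)+1) - Real.log M := by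
        have h2 := Real.log_le_sub_one_of_pos (show (0:ℝ) < (M:ℝ)/((M:ℝ)+1) by positivity)
        rw [Real.log_div (by linarith) (by linarith)] at h2
        have h3 : (M:ℝ)/((M:ℝ)+1) = 1 - 1/((M:ℝ)+1) := by field_simp; ring
        rw [h3] at h2
        linarith
      have hcast : ((M+1:ℕ):ℝ) = (M:ℝ)+1 := by push_cast; ring
      rw [hcast]
      have h4 : (1:ℝ)/(1+(M:ℝ)) = 1/((M:ℝ)+1) := by ring_nf
      linarith [ih]

private lemma invsq_le (M : ℕ) :
    ∑ j ∈ Finset.range M, (1:ℝ)/(1+(j:ℝ))^2 ≤ 2 := by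
  cases M with
  | zero => simp
  | succ M =>
    rw [Finset.sum_range_succ']
    have htel : ∑ j ∈ Finset.range M, (1:ℝ)/(1+((j+1:ℕ):ℝ))^2
        ≤ ∑ j ∈ Finset.range M, ((fun i : ℕ => 1/(1+(i:ℝ))) j - (fun i : ℕ => 1/(1+(i:ℝ))) (j+1)) := by
      apply Finset.sum_le_sum
      intro j _
      have hj : (0:ℝ) ≤ (j:ℝ) := Nat.cast_nonneg j
      have e1 : (fun i : ℕ => 1/(1+(i:ℝ))) j - (fun i : ℕ => 1/(1+(i:ℝ))) (j+1)
          = 1/((1+(j:ℝ))*(1+((j:ℝ)+1))) := by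
        simp only []
        push_cast
        field_simp
        try ring
      rw [e1]
      push_cast
      apply one_div_le_one_div_of_le (by positivity)
      nlinarith
    rw [Finset.sum_range_sub' (fun i : ℕ => 1/(1+(i:ℝ))) M] at htel
    have h0 : (1:ℝ)/(1+((0:ℕ):ℝ))^2 = 1 := by norm_num
    have h5 : (0:ℝ) ≤ 1/(1+(M:ℝ)) := by positivity
    have h6 : (1:ℝ)/(1+((0:ℕ):ℝ)) = 1 := by norm_num
    rw [h0]
    rw [h6] at htel
    linarith

private lemma cauchy_le (m : ℝ) (hm : 1 ≤ m) (M : ℕ) :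
    ∑ j ∈ Finset.range M, 1/(m^2+(j:ℝ)^2) ≤ 3/m := by
  have hm0 : (0:ℝ) < m := by linarith
  cases M with
  | zero => simp; positivity
  | succ M =>
    rw [Finset.sum_range_succ']
    have htel : ∑ j ∈ Finset.range M, 1/(m^2+((j+1:ℕ):ℝ)^2)
        ≤ ∑ j ∈ Finset.range M, ((fun i : ℕ => 2/(m+(i:ℝ))) j - (fun i : ℕ => 2/(m+(i:ℝ))) (j+1)) := by
      apply Finset.sum_le_sum
      intro j _
      have hj : (0:ℝ) ≤ (j:ℝ) := Nat.cast_nonneg j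
      have e1 : (fun i : ℕ => 2/(m+(i:ℝ))) j - (fun i : ℕ => 2/(m+(i:ℝ))) (j+1)
          = 2/((m+(j:ℝ))*(m+(j:ℝ)+1)) := by
        simp only []
        push_cast
        field_simp
        ring
      rw [e1]
      push_cast
      rw [div_le_div_iff₀ (by positivity) (by positivity)]
      nlinarith [sq_nonneg (m - ((j:ℝ)+1))]
    rw [Finset.sum_range_sub' (fun i : ℕ => 2/(m+(i:ℝ))) M] at htel
    have h0 : 1/(m^2+((0:ℕ):ℝ)^2) ≤ 1/m := by
      rw [show m^2+((0:ℕ):ℝ)^2 = m^2 by norm_num]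
      apply one_div_le_one_div_of_le hm0
      nlinarith
    have h5 : (0:ℝ) ≤ 2/(m+(M:ℝ)) := by positivity
    have h6 : (2:ℝ)/(m+((0:ℕ):ℝ)) = 2/m := by norm_num
    rw [h6] at htel
    have : (3:ℝ)/m = 2/m + 1/m := by ring
    rw [this]
    linarith

private lemma cube_tail_le (r : ℝ) (hr : 0 ≤ r) (M : ℕ) :
    ∑ j ∈ Finset.range M, (if (j:ℝ)+1 < r then (0:ℝ) else 1/(1+(j:ℝ))^3) ≤ 18/(1+r)^2 := by
  rcases le_or_gt r 2 with h2 | h2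
  · calc ∑ j ∈ Finset.range M, (if (j:ℝ)+1 < r then (0:ℝ) else 1/(1+(j:ℝ))^3)
        ≤ ∑ j ∈ Finset.range M, (1:ℝ)/(1+(j:ℝ))^2 := by
          apply Finset.sum_le_sum
          intro j _
          have hj : (0:ℝ) ≤ (j:ℝ) := Nat.cast_nonneg j
          split
          · positivity
          · apply one_div_le_one_div_of_le (by positivity)
            calc (1+(j:ℝ))^2 = (1+(j:ℝ))^2 * 1 := by ring
              _ ≤ (1+(j:ℝ))^2 * (1+(j:ℝ)) := by nlinarith
              _ = (1+(j:ℝ))^3 := by ring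
      _ ≤ 2 := invsq_le M
      _ ≤ 18/(1+r)^2 := by
          rw [le_div_iff₀ (by positivity)]
          nlinarith
  · -- r > 2
    have hceil : r ≤ (⌈r⌉:ℝ) := Int.le_ceil r
    have hceil2 : (⌈r⌉:ℝ) < r + 1 := Int.ceil_lt_add_one r
    have h3 : (3:ℤ) ≤ ⌈r⌉ := by
      have : (2:ℤ) < ⌈r⌉ := by
        rw [Int.lt_ceil]; exact_mod_cast h2
      omega
    set N₀ : ℕ := (⌈r⌉ - 1).toNat with hN₀def
    have hN₀cast : (N₀:ℝ) = (⌈r⌉:ℝ) - 1 := by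
      have : ((⌈r⌉ - 1).toNat : ℤ) = ⌈r⌉ - 1 := Int.toNat_of_nonneg (by omega)
      exact_mod_cast congrArg (Int.cast : ℤ → ℝ) this
    have hN₀ge : r - 1 ≤ (N₀:ℝ) := by linarith
    have hN₀2 : (2:ℝ) ≤ (N₀:ℝ) := by
      have : ((3:ℤ):ℝ) ≤ (⌈r⌉:ℝ) := by exact_mod_cast h3
      push_cast at this ⊢
      linarith
    have hcond : ∀ j : ℕ, ((j:ℝ)+1 < r ↔ j < N₀) := by
      intro j
      constructor
      · intro h
        by_contra hc
        push_neg at hc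
        have : (N₀:ℝ) ≤ (j:ℝ) := by exact_mod_cast hc
        linarith
      · intro h
        have : (j:ℝ) ≤ (N₀:ℝ) - 1 := by
          have : (j+1:ℕ) ≤ N₀ := h
          have := (Nat.cast_le (α := ℝ)).mpr this
          push_cast at this
          linarith
        have hlt : (j:ℝ) + 1 ≤ (N₀:ℝ) := by linarith
        calc (j:ℝ)+1 ≤ (N₀:ℝ) := hlt
          _ = (⌈r⌉:ℝ) - 1 := hN₀cast
          _ < r := by linarith
    simp only [hcond]
    have hite : ∀ j : ℕ, (if j < N₀ then (0:ℝ) else 1/(1+(j:ℝ))^3)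
        = (if N₀ ≤ j then (1:ℝ)/(1+(j:ℝ))^3 else 0) := by
      intro j
      by_cases h : j < N₀
      · rw [if_pos h, if_neg (by omega)]
      · rw [if_neg h, if_pos (by omega)]
    simp only [hite]
    rw [← Finset.sum_filter]
    have hsubset : (Finset.range M).filter (fun j => N₀ ≤ j) ⊆ Finset.Ico N₀ (max M N₀) := by
      intro j hj
      simp only [Finset.mem_filter, Finset.mem_range] at hj
      simp only [Finset.mem_Ico]
      exact ⟨hj.2, lt_max_of_lt_left hj.1⟩
    have hstep : ∑ j ∈ (Finset.range M).filter (fun j => N₀ ≤ j), (1:ℝ)/(1+(j:ℝ))^3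
        ≤ ∑ j ∈ Finset.Ico N₀ (max M N₀), (1:ℝ)/(1+(j:ℝ))^3 := by
      apply Finset.sum_le_sum_of_subset_of_nonneg hsubset
      intro j _ _
      positivity
    have hpt : ∀ j ∈ Finset.Ico N₀ (max M N₀), (1:ℝ)/(1+(j:ℝ))^3
        ≤ (fun i : ℕ => 1/(2*(i:ℝ)^2)) j - (fun i : ℕ => 1/(2*(i:ℝ)^2)) (j+1) := by
      intro j hj
      simp only [Finset.mem_Ico] at hj
      have hj1 : (2:ℝ) ≤ (j:ℝ) := le_trans hN₀2 (by exact_mod_cast hj.1)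
      simp only []
      have e1 : 1/(2*(j:ℝ)^2) - 1/(2*((j+1:ℕ):ℝ)^2) = (2*(j:ℝ)+1)/(2*(j:ℝ)^2*((j:ℝ)+1)^2) := by
        push_cast
        field_simp
        ring
      rw [e1]
      rw [div_le_div_iff₀ (by positivity) (by positivity)]
      nlinarith [sq_nonneg (j:ℝ)]
    have htel : ∑ j ∈ Finset.Ico N₀ (max M N₀), (1:ℝ)/(1+(j:ℝ))^3
        ≤ 1/(2*(N₀:ℝ)^2) := by
      calc ∑ j ∈ Finset.Ico N₀ (max M N₀), (1:ℝ)/(1+(j:ℝ))^3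
          ≤ ∑ j ∈ Finset.Ico N₀ (max M N₀),
            ((fun i : ℕ => 1/(2*(i:ℝ)^2)) j - (fun i : ℕ => 1/(2*(i:ℝ)^2)) (j+1)) :=
            Finset.sum_le_sum hpt
        _ = ∑ i ∈ Finset.range (max M N₀ - N₀),
            ((fun i : ℕ => 1/(2*(i:ℝ)^2)) (N₀+i) - (fun i : ℕ => 1/(2*(i:ℝ)^2)) (N₀+i+1)) := by
            rw [Finset.sum_Ico_eq_sum_range]
        _ = (fun i : ℕ => 1/(2*((N₀+i:ℕ):ℝ)^2)) 0 - (fun i : ℕ => 1/(2*((N₀+i:ℕ):ℝ)^2)) (max M N₀ - N₀) := by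
            rw [← Finset.sum_range_sub' (fun i : ℕ => 1/(2*((N₀+i:ℕ):ℝ)^2)) (max M N₀ - N₀)]
            apply Finset.sum_congr rfl
            intro i _
            simp only []
            congr 2
        _ ≤ 1/(2*(N₀:ℝ)^2) := by
            simp only [Nat.add_zero]
            have : (0:ℝ) ≤ 1/(2*((N₀+(max M N₀ - N₀):ℕ):ℝ)^2) := by positivity
            linarith
    calc ∑ j ∈ (Finset.range M).filter (fun j => N₀ ≤ j), (1:ℝ)/(1+(j:ℝ))^3
        ≤ 1/(2*(N₀:ℝ)^2) := le_trans hstep htel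
      _ ≤ 18/(1+r)^2 := by
          rw [div_le_div_iff₀ (by positivity) (by positivity)]
          nlinarith [hN₀ge, h2]


private lemma side_sum (S : Finset ℤ) (F : ℤ → ℝ) (φ : ℕ → ℝ) (hφ : ∀ j, 0 ≤ φ j)
    (N : ℕ) (ι : ℤ → ℕ) (hinj : ∀ k1 ∈ S, ∀ k2 ∈ S, ι k1 = ι k2 → k1 = k2)
    (hle : ∀ k ∈ S, F k ≤ φ (ι k)) (hiN : ∀ k ∈ S, ι k < N+1) :
    ∑ k ∈ S, F k ≤ ∑ j ∈ Finset.range (N+1), φ j := by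
  calc ∑ k ∈ S, F k ≤ ∑ k ∈ S, φ (ι k) := Finset.sum_le_sum hle
    _ = ∑ j ∈ S.image ι, φ j := (Finset.sum_image hinj).symm
    _ ≤ ∑ j ∈ Finset.range (N+1), φ j := by
        apply Finset.sum_le_sum_of_subset_of_nonneg
        · intro j hj
          simp only [Finset.mem_image] at hj
          obtain ⟨k, hk, rfl⟩ := hj
          simp only [Finset.mem_range]
          exact hiN k hk
        · intro j _ _; exact hφ j

private lemma int_to_nat_sum (S : Finset ℤ) (t : ℝ) (F : ℤ → ℝ) (φ : ℕ → ℝ)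
    (hφ : ∀ j, 0 ≤ φ j) (N : ℕ)
    (hFφ : ∀ k ∈ S, ∀ j : ℕ, (j:ℝ) ≤ |(k:ℝ) - t| → |(k:ℝ) - t| ≤ (j:ℝ)+1 → F k ≤ φ j)
    (hN : ∀ k ∈ S, |(k:ℝ) - t| ≤ (N:ℝ)) :
    ∑ k ∈ S, F k ≤ 2 * ∑ j ∈ Finset.range (N+1), φ j := by
  classical
  have hceil1 : (⌈t⌉:ℝ) < t + 1 := Int.ceil_lt_add_one t
  have hceil2 : t ≤ (⌈t⌉:ℝ) := Int.le_ceil t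
  set m₀ : ℤ := ⌈t⌉ with hm₀
  rw [← Finset.sum_filter_add_sum_filter_not S (fun k => m₀ ≤ k) F]
  have hplus : ∑ k ∈ S.filter (fun k => m₀ ≤ k), F k ≤ ∑ j ∈ Finset.range (N+1), φ j := by
    apply side_sum _ _ _ hφ _ (fun k => (k - m₀).toNat)
    · intro k1 h1 k2 h2 he
      simp only [Finset.mem_filter] at h1 h2
      omega
    · intro k hk
      simp only [Finset.mem_filter] at hk
      obtain ⟨hkS, hkm⟩ := hk
      have hkm' : (m₀:ℝ) ≤ (k:ℝ) := by exact_mod_cast hkm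
      have hc : (((k - m₀).toNat : ℕ) : ℝ) = (k:ℝ) - (m₀:ℝ) := by
        have : (((k - m₀).toNat : ℕ) : ℤ) = k - m₀ := Int.toNat_of_nonneg (by omega)
        exact_mod_cast congrArg (Int.cast : ℤ → ℝ) this
      have habs : |(k:ℝ) - t| = (k:ℝ) - t := abs_of_nonneg (by linarith)
      apply hFφ k hkS
      · rw [habs, hc]; linarith
      · rw [habs, hc]; linarith
    · intro k hk
      simp only [Finset.mem_filter] at hk
      obtain ⟨hkS, hkm⟩ := hk
      have hkm' : (m₀:ℝ) ≤ (k:ℝ) := by exact_mod_cast hkm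
      have hc : (((k - m₀).toNat : ℕ) : ℝ) = (k:ℝ) - (m₀:ℝ) := by
        have : (((k - m₀).toNat : ℕ) : ℤ) = k - m₀ := Int.toNat_of_nonneg (by omega)
        exact_mod_cast congrArg (Int.cast : ℤ → ℝ) this
      have habs : |(k:ℝ) - t| = (k:ℝ) - t := abs_of_nonneg (by linarith)
      have h1 : ((k - m₀).toNat : ℝ) ≤ (N:ℝ) := by
        rw [hc]
        have := hN k hkS
        rw [habs] at this
        linarith
      have : (k - m₀).toNat ≤ N := by exact_mod_cast h1
      omega
  have hminus : ∑ k ∈ S.filter (fun k => ¬ m₀ ≤ k), F k ≤ ∑ j ∈ Finset.range (N+1), φ j := by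
    apply side_sum _ _ _ hφ _ (fun k => (m₀ - 1 - k).toNat)
    · intro k1 h1 k2 h2 he
      simp only [Finset.mem_filter] at h1 h2
      omega
    · intro k hk
      simp only [Finset.mem_filter] at hk
      obtain ⟨hkS, hkm⟩ := hk
      have hkm2 : k ≤ m₀ - 1 := by omega
      have hkm' : (k:ℝ) ≤ (m₀:ℝ) - 1 := by exact_mod_cast hkm2
      have hc : (((m₀ - 1 - k).toNat : ℕ) : ℝ) = (m₀:ℝ) - 1 - (k:ℝ) := by
        have : (((m₀ - 1 - k).toNat : ℕ) : ℤ) = m₀ - 1 - k := Int.toNat_of_nonneg (by omega)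
        exact_mod_cast congrArg (Int.cast : ℤ → ℝ) this
      have habs : |(k:ℝ) - t| = t - (k:ℝ) := by
        rw [abs_sub_comm]
        exact abs_of_nonneg (by linarith)
      apply hFφ k hkS
      · rw [habs, hc]; linarith
      · rw [habs, hc]; linarith
    · intro k hk
      simp only [Finset.mem_filter] at hk
      obtain ⟨hkS, hkm⟩ := hk
      have hkm2 : k ≤ m₀ - 1 := by omega
      have hkm' : (k:ℝ) ≤ (m₀:ℝ) - 1 := by exact_mod_cast hkm2
      have hc : (((m₀ - 1 - k).toNat : ℕ) : ℝ) = (m₀:ℝ) - 1 - (k:ℝ) := by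
        have : (((m₀ - 1 - k).toNat : ℕ) : ℤ) = m₀ - 1 - k := Int.toNat_of_nonneg (by omega)
        exact_mod_cast congrArg (Int.cast : ℤ → ℝ) this
      have habs : |(k:ℝ) - t| = t - (k:ℝ) := by
        rw [abs_sub_comm]
        exact abs_of_nonneg (by linarith)
      have h1 : ((m₀ - 1 - k).toNat : ℝ) ≤ (N:ℝ) := by
        rw [hc]
        have := hN k hkS
        rw [habs] at this
        linarith
      have : (m₀ - 1 - k).toNat ≤ N := by exact_mod_cast h1
      omega
  linarith

private lemma exists_bound (S : Finset ℤ) (t : ℝ) : ∃ N : ℕ, ∀ k ∈ S, |(k:ℝ) - t| ≤ (N:ℝ) := by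
  refine ⟨(⌈∑ k ∈ S, |(k:ℝ) - t|⌉).toNat, ?_⟩
  intro k hk
  have h1 : |(k:ℝ) - t| ≤ ∑ k ∈ S, |(k:ℝ) - t| :=
    Finset.single_le_sum (f := fun k : ℤ => |(k:ℝ) - t|) (fun i _ => abs_nonneg _) hk
  have h2 : (0:ℝ) ≤ ∑ k ∈ S, |(k:ℝ) - t| := Finset.sum_nonneg fun i _ => abs_nonneg _
  have h3 : (0:ℤ) ≤ ⌈∑ k ∈ S, |(k:ℝ) - t|⌉ := Int.ceil_nonneg h2
  have h4 : ((⌈∑ k ∈ S, |(k:ℝ) - t|⌉.toNat : ℕ) : ℝ) = ((⌈∑ k ∈ S, |(k:ℝ) - t|⌉ : ℤ) : ℝ) := by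
    exact_mod_cast congrArg (Int.cast : ℤ → ℝ) (Int.toNat_of_nonneg h3)
  rw [h4]
  exact le_trans h1 (Int.le_ceil _)

private lemma Zsq (S : Finset ℤ) (t m : ℝ) (hm : 1 ≤ m) :
    ∑ k ∈ S, 1/(m^2 + ((k:ℝ) - t)^2) ≤ 6/m := by
  obtain ⟨N, hN⟩ := exists_bound S t
  have key := int_to_nat_sum S t (fun k => 1/(m^2 + ((k:ℝ) - t)^2)) (fun j => 1/(m^2+(j:ℝ)^2))
    (fun j => by positivity) N
    (by
      intro k hk j hj1 hj2
      apply one_div_le_one_div_of_le (by positivity)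
      have h1 : (j:ℝ)^2 ≤ |(k:ℝ) - t|^2 := by
        apply pow_le_pow_left₀ (Nat.cast_nonneg j) hj1
      rw [sq_abs] at h1
      linarith) hN
  have h2 := cauchy_le m hm (N+1)
  calc ∑ k ∈ S, 1/(m^2 + ((k:ℝ) - t)^2) ≤ 2 * ∑ j ∈ Finset.range (N+1), 1/(m^2+(j:ℝ)^2) := key
    _ ≤ 2 * (3/m) := by linarith
    _ = 6/m := by ring

private lemma Zone (S : Finset ℤ) (t R : ℝ) (hR : 0 ≤ R) (hS : ∀ k ∈ S, |(k:ℝ) - t| ≤ R) :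
    ∑ k ∈ S, 1/(1 + |(k:ℝ) - t|) ≤ 6 * Real.log (Real.exp 1 + R) := by
  set N : ℕ := (⌈R⌉).toNat with hNdef
  have h3 : (0:ℤ) ≤ ⌈R⌉ := Int.ceil_nonneg hR
  have hNcast : ((N:ℕ):ℝ) = ((⌈R⌉:ℤ):ℝ) := by
    exact_mod_cast congrArg (Int.cast : ℤ → ℝ) (Int.toNat_of_nonneg h3)
  have hNR : (N:ℝ) ≤ R + 1 := by rw [hNcast]; linarith [Int.ceil_lt_add_one R]
  have hRN : R ≤ (N:ℝ) := by rw [hNcast]; exact Int.le_ceil R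
  have key := int_to_nat_sum S t (fun k => 1/(1 + |(k:ℝ) - t|)) (fun j => 1/(1+(j:ℝ)))
    (fun j => by positivity) N
    (by
      intro k hk j hj1 hj2
      apply one_div_le_one_div_of_le (by positivity)
      linarith)
    (fun k hk => le_trans (hS k hk) hRN)
  have hharm := harm_le (N+1)
  have hlog1 : (1:ℝ) ≤ Real.log (Real.exp 1 + R) := by
    calc (1:ℝ) = Real.log (Real.exp 1) := (Real.log_exp 1).symm
      _ ≤ Real.log (Real.exp 1 + R) := Real.log_le_log (Real.exp_pos 1) (by linarith)
  have hlog2 : Real.log ((N+1:ℕ):ℝ) ≤ 1 + Real.log (Real.exp 1 + R) := by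
    have he : (2.7182818283:ℝ) < Real.exp 1 := Real.exp_one_gt_d9
    have h1 : ((N+1:ℕ):ℝ) ≤ Real.exp 1 * (Real.exp 1 + R) := by
      push_cast
      nlinarith
    calc Real.log ((N+1:ℕ):ℝ) ≤ Real.log (Real.exp 1 * (Real.exp 1 + R)) :=
          Real.log_le_log (by positivity) h1
      _ = 1 + Real.log (Real.exp 1 + R) := by
          rw [Real.log_mul (by positivity) (by positivity), Real.log_exp]
  calc ∑ k ∈ S, 1/(1 + |(k:ℝ) - t|) ≤ 2 * ∑ j ∈ Finset.range (N+1), 1/(1+(j:ℝ)) := key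
    _ ≤ 2 * (1 + Real.log ((N+1:ℕ):ℝ)) := by linarith
    _ ≤ 2 * (2 + Real.log (Real.exp 1 + R)) := by linarith
    _ ≤ 6 * Real.log (Real.exp 1 + R) := by linarith

private lemma Zcount (S : Finset ℤ) (t R : ℝ) (hR : 0 ≤ R) (hS : ∀ k ∈ S, |(k:ℝ) - t| ≤ R) :
    ∑ k ∈ S, (1:ℝ) ≤ 4*(1+R) := by
  set N : ℕ := (⌈R⌉).toNat with hNdef
  have h3 : (0:ℤ) ≤ ⌈R⌉ := Int.ceil_nonneg hR
  have hNcast : ((N:ℕ):ℝ) = ((⌈R⌉:ℤ):ℝ) := by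
    exact_mod_cast congrArg (Int.cast : ℤ → ℝ) (Int.toNat_of_nonneg h3)
  have hNR : (N:ℝ) ≤ R + 1 := by rw [hNcast]; linarith [Int.ceil_lt_add_one R]
  have hRN : R ≤ (N:ℝ) := by rw [hNcast]; exact Int.le_ceil R
  have key := int_to_nat_sum S t (fun _ => (1:ℝ)) (fun _ => (1:ℝ))
    (fun j => zero_le_one) N
    (fun k hk j hj1 hj2 => le_refl 1)
    (fun k hk => le_trans (hS k hk) hRN)
  have hsum : ∑ j ∈ Finset.range (N+1), (1:ℝ) = ((N+1:ℕ):ℝ) := by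
    rw [Finset.sum_const, Finset.card_range, nsmul_eq_mul, mul_one]
  rw [hsum] at key
  push_cast at key
  linarith

private lemma Zcube (S : Finset ℤ) (t r : ℝ) (hr : 0 ≤ r) (hS : ∀ k ∈ S, r ≤ |(k:ℝ) - t|) :
    ∑ k ∈ S, 1/(1 + |(k:ℝ) - t|)^3 ≤ 36/(1+r)^2 := by
  obtain ⟨N, hN⟩ := exists_bound S t
  have key := int_to_nat_sum S t (fun k => 1/(1 + |(k:ℝ) - t|)^3)
    (fun j => if (j:ℝ)+1 < r then (0:ℝ) else 1/(1+(j:ℝ))^3)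
    (fun j => by
      show (0:ℝ) ≤ if (j:ℝ)+1 < r then (0:ℝ) else 1/(1+(j:ℝ))^3
      split
      · exact le_refl 0
      · positivity) N
    (by
      intro k hk j hj1 hj2
      show (1:ℝ)/(1 + |(k:ℝ) - t|)^3 ≤ if (j:ℝ)+1 < r then (0:ℝ) else 1/(1+(j:ℝ))^3
      have hcond : ¬((j:ℝ)+1 < r) := by
        push_neg
        exact le_trans (hS k hk) hj2
      rw [if_neg hcond]
      apply one_div_le_one_div_of_le (by positivity)
      apply pow_le_pow_left₀ (by positivity)
      linarith) hN
  have h2 := cube_tail_le r hr (N+1)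
  calc ∑ k ∈ S, 1/(1 + |(k:ℝ) - t|)^3
      ≤ 2 * ∑ j ∈ Finset.range (N+1), (if (j:ℝ)+1 < r then (0:ℝ) else 1/(1+(j:ℝ))^3) := key
    _ ≤ 2 * (18/(1+r)^2) := by linarith
    _ = 36/(1+r)^2 := by ring

private lemma normsq_latt (n : ℤ × ℤ) (c : E2) :
    ‖latt n - c‖^2 = ((n.1:ℝ) - c 0)^2 + ((n.2:ℝ) - c 1)^2 := by
  rw [EuclideanSpace.norm_eq]
  rw [Real.sq_sqrt (by positivity)]
  rw [Fin.sum_univ_two]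
  have h0 : (latt n - c) 0 = (n.1:ℝ) - c 0 := by
    rw [PiLp.sub_apply]
    simp [latt]
  have h1 : (latt n - c) 1 = (n.2:ℝ) - c 1 := by
    rw [PiLp.sub_apply]
    simp [latt]
  rw [h0, h1]
  rw [Real.norm_eq_abs, Real.norm_eq_abs, sq_abs, sq_abs]

private lemma abs_coord_fst_le (n : ℤ × ℤ) (c : E2) : |(n.1:ℝ) - c 0| ≤ ‖latt n - c‖ := by
  have h := normsq_latt n c
  nlinarith [norm_nonneg (latt n - c), sq_nonneg ((n.2:ℝ) - c 1), sq_abs ((n.1:ℝ) - c 0),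
    abs_nonneg ((n.1:ℝ) - c 0)]

private lemma abs_coord_snd_le (n : ℤ × ℤ) (c : E2) : |(n.2:ℝ) - c 1| ≤ ‖latt n - c‖ := by
  have h := normsq_latt n c
  nlinarith [norm_nonneg (latt n - c), sq_nonneg ((n.1:ℝ) - c 0), sq_abs ((n.2:ℝ) - c 1),
    abs_nonneg ((n.2:ℝ) - c 1)]

private lemma norm_le_coords (n : ℤ × ℤ) (c : E2) :
    ‖latt n - c‖ ≤ |(n.1:ℝ) - c 0| + |(n.2:ℝ) - c 1| := by
  have h := normsq_latt n c
  nlinarith [norm_nonneg (latt n - c), sq_abs ((n.1:ℝ) - c 0), sq_abs ((n.2:ℝ) - c 1),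
    abs_nonneg ((n.1:ℝ) - c 0), abs_nonneg ((n.2:ℝ) - c 1),
    mul_nonneg (abs_nonneg ((n.1:ℝ) - c 0)) (abs_nonneg ((n.2:ℝ) - c 1))]

private lemma Ksq (F : Finset (ℤ × ℤ)) (c : E2) (R : ℝ) (hR : 0 ≤ R)
    (hF : ∀ n ∈ F, ‖latt n - c‖ ≤ R) :
    ∑ n ∈ F, 1/(1+‖latt n - c‖)^2 ≤ 72 * Real.log (Real.exp 1 + R) := by
  classical
  set S₁ : Finset ℤ := F.image Prod.fst with hS₁def
  set S₂ : Finset ℤ := F.image Prod.snd with hS₂def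
  have hsub : F ⊆ S₁ ×ˢ S₂ := by
    intro n hn
    rw [Finset.mem_product]
    exact ⟨Finset.mem_image_of_mem _ hn, Finset.mem_image_of_mem _ hn⟩
  have step1 : ∑ n ∈ F, 1/(1+‖latt n - c‖)^2
      ≤ ∑ p ∈ S₁ ×ˢ S₂, 1/((1+((p.1:ℝ) - c 0)^2) + ((p.2:ℝ) - c 1)^2) := by
    calc ∑ n ∈ F, 1/(1+‖latt n - c‖)^2
        ≤ ∑ n ∈ F, 1/((1+((n.1:ℝ) - c 0)^2) + ((n.2:ℝ) - c 1)^2) := by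
          apply Finset.sum_le_sum
          intro n _
          apply one_div_le_one_div_of_le (by positivity)
          have h := normsq_latt n c
          nlinarith [norm_nonneg (latt n - c)]
      _ ≤ ∑ p ∈ S₁ ×ˢ S₂, 1/((1+((p.1:ℝ) - c 0)^2) + ((p.2:ℝ) - c 1)^2) := by
          apply Finset.sum_le_sum_of_subset_of_nonneg hsub
          intro p _ _
          positivity
  rw [Finset.sum_product] at step1
  have hS₁mem : ∀ k ∈ S₁, |(k:ℝ) - c 0| ≤ R := by
    intro k hk
    rw [hS₁def, Finset.mem_image] at hk
    obtain ⟨n, hn, rfl⟩ := hk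
    exact le_trans (abs_coord_fst_le n c) (hF n hn)
  have inner : ∀ k₁ ∈ S₁,
      ∑ k₂ ∈ S₂, 1/((1+((k₁:ℝ) - c 0)^2) + (((k₁,k₂).2:ℝ) - c 1)^2) ≤ 12/(1+|(k₁:ℝ) - c 0|) := by
    intro k₁ _
    set u : ℝ := (k₁:ℝ) - c 0 with hu
    set m : ℝ := Real.sqrt (1+u^2) with hmdef
    have hmsq : m^2 = 1+u^2 := Real.sq_sqrt (by positivity)
    have hm1 : 1 ≤ m := by
      rw [show (1:ℝ) = Real.sqrt 1 by simp [Real.sqrt_one]]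
      apply Real.sqrt_le_sqrt
      nlinarith [sq_nonneg u]
    have hz := Zsq S₂ (c 1) m hm1
    have heq : ∑ k₂ ∈ S₂, 1/((1+u^2) + ((k₂:ℝ) - c 1)^2)
        = ∑ k₂ ∈ S₂, 1/(m^2 + ((k₂:ℝ) - c 1)^2) := by
      apply Finset.sum_congr rfl
      intro k₂ _
      rw [hmsq]
    have h2m : 1+|u| ≤ 2*m := by
      have h24 : (1+|u|)^2 ≤ (2*m)^2 := by
        nlinarith [sq_nonneg (|u|-1), sq_abs u]
      calc 1+|u| = Real.sqrt ((1+|u|)^2) := (Real.sqrt_sq (by positivity)).symm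
        _ ≤ Real.sqrt ((2*m)^2) := Real.sqrt_le_sqrt h24
        _ = 2*m := Real.sqrt_sq (by linarith)
    have h6 : 6/m ≤ 12/(1+|u|) := by
      rw [div_le_div_iff₀ (by linarith) (by positivity)]
      nlinarith [abs_nonneg u]
    calc ∑ k₂ ∈ S₂, 1/((1+u^2) + ((k₂:ℝ) - c 1)^2)
        = ∑ k₂ ∈ S₂, 1/(m^2 + ((k₂:ℝ) - c 1)^2) := heq
      _ ≤ 6/m := hz
      _ ≤ 12/(1+|u|) := h6
  have step2 : ∑ k₁ ∈ S₁, ∑ k₂ ∈ S₂, 1/((1+((k₁:ℝ) - c 0)^2) + ((k₂:ℝ) - c 1)^2)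
      ≤ ∑ k₁ ∈ S₁, 12/(1+|(k₁:ℝ) - c 0|) := by
    apply Finset.sum_le_sum
    intro k₁ hk₁
    exact inner k₁ hk₁
  have step3 : ∑ k₁ ∈ S₁, (12:ℝ)/(1+|(k₁:ℝ) - c 0|)
      ≤ 12 * (6 * Real.log (Real.exp 1 + R)) := by
    have hz := Zone S₁ (c 0) R hR hS₁mem
    calc ∑ k₁ ∈ S₁, (12:ℝ)/(1+|(k₁:ℝ) - c 0|)
        = 12 * ∑ k₁ ∈ S₁, 1/(1+|(k₁:ℝ) - c 0|) := by
          rw [Finset.mul_sum]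
          apply Finset.sum_congr rfl
          intro k _
          ring
      _ ≤ 12 * (6 * Real.log (Real.exp 1 + R)) := by
          have hlog : (0:ℝ) ≤ Real.log (Real.exp 1 + R) := by
            have : (1:ℝ) ≤ Real.exp 1 + R := by linarith [Real.add_one_le_exp (1:ℝ)]
            exact Real.log_nonneg this
          nlinarith [hz]
  calc ∑ n ∈ F, 1/(1+‖latt n - c‖)^2
      ≤ ∑ k₁ ∈ S₁, ∑ k₂ ∈ S₂, 1/((1+((k₁:ℝ) - c 0)^2) + ((k₂:ℝ) - c 1)^2) := step1
    _ ≤ ∑ k₁ ∈ S₁, 12/(1+|(k₁:ℝ) - c 0|) := step2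
    _ ≤ 12 * (6 * Real.log (Real.exp 1 + R)) := step3
    _ = 72 * Real.log (Real.exp 1 + R) := by ring

private lemma Kone (F : Finset (ℤ × ℤ)) (c : E2) (R : ℝ) (hR : 0 ≤ R)
    (hF : ∀ n ∈ F, ‖latt n - c‖ ≤ R) :
    ∑ n ∈ F, 1/(1+‖latt n - c‖) ≤ 24 * (1+R) * Real.log (Real.exp 1 + R) := by
  classical
  set S₁ : Finset ℤ := F.image Prod.fst with hS₁def
  set S₂ : Finset ℤ := F.image Prod.snd with hS₂def
  have hsub : F ⊆ S₁ ×ˢ S₂ := by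
    intro n hn
    rw [Finset.mem_product]
    exact ⟨Finset.mem_image_of_mem _ hn, Finset.mem_image_of_mem _ hn⟩
  have hS₁mem : ∀ k ∈ S₁, |(k:ℝ) - c 0| ≤ R := by
    intro k hk
    rw [hS₁def, Finset.mem_image] at hk
    obtain ⟨n, hn, rfl⟩ := hk
    exact le_trans (abs_coord_fst_le n c) (hF n hn)
  have hS₂mem : ∀ k ∈ S₂, |(k:ℝ) - c 1| ≤ R := by
    intro k hk
    rw [hS₂def, Finset.mem_image] at hk
    obtain ⟨n, hn, rfl⟩ := hk
    exact le_trans (abs_coord_snd_le n c) (hF n hn)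
  have step1 : ∑ n ∈ F, 1/(1+‖latt n - c‖)
      ≤ ∑ p ∈ S₁ ×ˢ S₂, 1/(1+|(p.1:ℝ) - c 0|) := by
    calc ∑ n ∈ F, 1/(1+‖latt n - c‖)
        ≤ ∑ n ∈ F, 1/(1+|(n.1:ℝ) - c 0|) := by
          apply Finset.sum_le_sum
          intro n _
          apply one_div_le_one_div_of_le (by positivity)
          linarith [abs_coord_fst_le n c]
      _ ≤ ∑ p ∈ S₁ ×ˢ S₂, 1/(1+|(p.1:ℝ) - c 0|) := by
          apply Finset.sum_le_sum_of_subset_of_nonneg hsub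
          intro p _ _
          positivity
  rw [Finset.sum_product] at step1
  have hcard : ∑ k₂ ∈ S₂, (1:ℝ) ≤ 4*(1+R) := Zcount S₂ (c 1) R hR hS₂mem
  have hinner : ∀ k₁ : ℤ, ∑ k₂ ∈ S₂, 1/(1+|(k₁:ℝ) - c 0|)
      = (∑ k₂ ∈ S₂, (1:ℝ)) * (1/(1+|(k₁:ℝ) - c 0|)) := by
    intro k₁
    rw [Finset.sum_mul]
    apply Finset.sum_congr rfl
    intro k _
    ring
  have step2 : ∑ k₁ ∈ S₁, ∑ k₂ ∈ S₂, 1/(1+|((k₁,k₂).1:ℝ) - c 0|)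
      ≤ (4*(1+R)) * ∑ k₁ ∈ S₁, 1/(1+|(k₁:ℝ) - c 0|) := by
    rw [Finset.mul_sum]
    apply Finset.sum_le_sum
    intro k₁ _
    rw [hinner k₁]
    apply mul_le_mul_of_nonneg_right hcard (by positivity)
  have hz := Zone S₁ (c 0) R hR hS₁mem
  have hlog : (0:ℝ) ≤ Real.log (Real.exp 1 + R) := by
    have : (1:ℝ) ≤ Real.exp 1 + R := by linarith [Real.add_one_le_exp (1:ℝ)]
    exact Real.log_nonneg this
  calc ∑ n ∈ F, 1/(1+‖latt n - c‖)
      ≤ ∑ k₁ ∈ S₁, ∑ k₂ ∈ S₂, 1/(1+|((k₁,k₂).1:ℝ) - c 0|) := step1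
    _ ≤ (4*(1+R)) * ∑ k₁ ∈ S₁, 1/(1+|(k₁:ℝ) - c 0|) := step2
    _ ≤ (4*(1+R)) * (6 * Real.log (Real.exp 1 + R)) := by
        apply mul_le_mul_of_nonneg_left hz (by positivity)
    _ = 24 * (1+R) * Real.log (Real.exp 1 + R) := by ring

private lemma K4half (F : Finset (ℤ × ℤ)) (c : E2) (R : ℝ) (hR : 0 ≤ R)
    (hF : ∀ n ∈ F, R ≤ ‖latt n - c‖ ∧ |(n.2:ℝ) - c 1| ≤ |(n.1:ℝ) - c 0|) :
    ∑ n ∈ F, 1/(1+‖latt n - c‖)^4 ≤ 576/(1+R)^2 := by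
  classical
  set S₁ : Finset ℤ := F.image Prod.fst with hS₁def
  set S₂ : Finset ℤ := F.image Prod.snd with hS₂def
  have hsub : F ⊆ S₁ ×ˢ S₂ := by
    intro n hn
    rw [Finset.mem_product]
    exact ⟨Finset.mem_image_of_mem _ hn, Finset.mem_image_of_mem _ hn⟩
  set H : ℤ × ℤ → ℝ := fun p =>
    if |(p.2:ℝ) - c 1| ≤ |(p.1:ℝ) - c 0| then 1/(1+|(p.1:ℝ) - c 0|)^4 else 0 with hHdef
  have hH0 : ∀ p : ℤ × ℤ, 0 ≤ H p := by
    intro p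
    rw [hHdef]
    dsimp only
    split
    · positivity
    · exact le_refl 0
  have step1 : ∑ n ∈ F, 1/(1+‖latt n - c‖)^4 ≤ ∑ p ∈ S₁ ×ˢ S₂, H p := by
    calc ∑ n ∈ F, 1/(1+‖latt n - c‖)^4 ≤ ∑ n ∈ F, H n := by
          apply Finset.sum_le_sum
          intro n hn
          rw [hHdef]
          dsimp only
          rw [if_pos (hF n hn).2]
          apply one_div_le_one_div_of_le (by positivity)
          apply pow_le_pow_left₀ (by positivity)
          linarith [abs_coord_fst_le n c]
      _ ≤ ∑ p ∈ S₁ ×ˢ S₂, H p := by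
          apply Finset.sum_le_sum_of_subset_of_nonneg hsub
          intro p _ _
          exact hH0 p
  rw [Finset.sum_product] at step1
  have hS₁mem : ∀ k ∈ S₁, R/2 ≤ |(k:ℝ) - c 0| := by
    intro k hk
    rw [hS₁def, Finset.mem_image] at hk
    obtain ⟨n, hn, rfl⟩ := hk
    have h1 := (hF n hn).1
    have h2 := (hF n hn).2
    have h3 := norm_le_coords n c
    linarith
  have hinner : ∀ k₁ ∈ S₁, ∑ k₂ ∈ S₂, H (k₁, k₂) ≤ 4/(1+|(k₁:ℝ) - c 0|)^3 := by
    intro k₁ _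
    set u : ℝ := (k₁:ℝ) - c 0 with hu
    have heq : ∑ k₂ ∈ S₂, H (k₁, k₂)
        = ∑ k₂ ∈ S₂.filter (fun k₂ : ℤ => |(k₂:ℝ) - c 1| ≤ |u|), 1/(1+|u|)^4 := by
      rw [Finset.sum_filter]
    have hcount : ∑ k₂ ∈ S₂.filter (fun k₂ : ℤ => |(k₂:ℝ) - c 1| ≤ |u|), (1:ℝ) ≤ 4*(1+|u|) := by
      apply Zcount _ (c 1) |u| (abs_nonneg u)
      intro k hk
      rw [Finset.mem_filter] at hk
      exact hk.2
    have heval : ∑ k₂ ∈ S₂.filter (fun k₂ : ℤ => |(k₂:ℝ) - c 1| ≤ |u|), (1:ℝ)/(1+|u|)^4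
        = (∑ k₂ ∈ S₂.filter (fun k₂ : ℤ => |(k₂:ℝ) - c 1| ≤ |u|), (1:ℝ)) * (1/(1+|u|)^4) := by
      rw [Finset.sum_mul]
      apply Finset.sum_congr rfl
      intro k _
      ring
    rw [heq, heval]
    have h4 : (4*(1+|u|)) * (1/(1+|u|)^4) = 4/(1+|u|)^3 := by
      have h1u : (0:ℝ) < 1+|u| := by positivity
      field_simp
    calc (∑ k₂ ∈ S₂.filter (fun k₂ : ℤ => |(k₂:ℝ) - c 1| ≤ |u|), (1:ℝ)) * (1/(1+|u|)^4)
        ≤ (4*(1+|u|)) * (1/(1+|u|)^4) := by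
          apply mul_le_mul_of_nonneg_right hcount (by positivity)
      _ = 4/(1+|u|)^3 := h4
  have step2 : ∑ k₁ ∈ S₁, ∑ k₂ ∈ S₂, H (k₁, k₂) ≤ ∑ k₁ ∈ S₁, 4/(1+|(k₁:ℝ) - c 0|)^3 :=
    Finset.sum_le_sum hinner
  have step3 : ∑ k₁ ∈ S₁, (4:ℝ)/(1+|(k₁:ℝ) - c 0|)^3 ≤ 4 * (36/(1+R/2)^2) := by
    have hz := Zcube S₁ (c 0) (R/2) (by linarith) hS₁mem
    calc ∑ k₁ ∈ S₁, (4:ℝ)/(1+|(k₁:ℝ) - c 0|)^3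
        = 4 * ∑ k₁ ∈ S₁, 1/(1+|(k₁:ℝ) - c 0|)^3 := by
          rw [Finset.mul_sum]
          apply Finset.sum_congr rfl
          intro k _
          ring
      _ ≤ 4 * (36/(1+R/2)^2) := by linarith
  have final : (4:ℝ) * (36/(1+R/2)^2) ≤ 576/(1+R)^2 := by
    rw [mul_div_assoc'] at *
    rw [div_le_div_iff₀ (by positivity) (by positivity)]
    nlinarith [sq_nonneg R]
  calc ∑ n ∈ F, 1/(1+‖latt n - c‖)^4
      ≤ ∑ k₁ ∈ S₁, ∑ k₂ ∈ S₂, H (k₁, k₂) := step1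
    _ ≤ ∑ k₁ ∈ S₁, 4/(1+|(k₁:ℝ) - c 0|)^3 := step2
    _ ≤ 4 * (36/(1+R/2)^2) := step3
    _ ≤ 576/(1+R)^2 := final

private lemma K4 (F : Finset (ℤ × ℤ)) (c : E2) (R : ℝ) (hR : 0 ≤ R)
    (hF : ∀ n ∈ F, R ≤ ‖latt n - c‖) :
    ∑ n ∈ F, 1/(1+‖latt n - c‖)^4 ≤ 1152/(1+R)^2 := by
  classical
  rw [← Finset.sum_filter_add_sum_filter_not F (fun n => |(n.2:ℝ) - c 1| ≤ |(n.1:ℝ) - c 0|)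
    (fun n => 1/(1+‖latt n - c‖)^4)]
  have h1 : ∑ n ∈ F.filter (fun n => |(n.2:ℝ) - c 1| ≤ |(n.1:ℝ) - c 0|),
      1/(1+‖latt n - c‖)^4 ≤ 576/(1+R)^2 := by
    apply K4half _ c R hR
    intro n hn
    rw [Finset.mem_filter] at hn
    exact ⟨hF n hn.1, hn.2⟩
  have h2 : ∑ n ∈ F.filter (fun n => ¬ |(n.2:ℝ) - c 1| ≤ |(n.1:ℝ) - c 0|),
      1/(1+‖latt n - c‖)^4 ≤ 576/(1+R)^2 := by
    set F₂ := F.filter (fun n => ¬ |(n.2:ℝ) - c 1| ≤ |(n.1:ℝ) - c 0|) with hF₂def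
    set c' : E2 := (!₂[c 1, c 0] : E2) with hc'def
    have hc'0 : c' 0 = c 1 := rfl
    have hc'1 : c' 1 = c 0 := rfl
    have hnorm : ∀ n : ℤ × ℤ, ‖latt (n.2, n.1) - c'‖ = ‖latt n - c‖ := by
      intro n
      have h1' := normsq_latt (n.2, n.1) c'
      have h2' := normsq_latt n c
      have heq : ‖latt (n.2, n.1) - c'‖^2 = ‖latt n - c‖^2 := by
        rw [h1', h2', hc'0, hc'1]
        ring
      calc ‖latt (n.2, n.1) - c'‖ = Real.sqrt (‖latt (n.2, n.1) - c'‖^2) :=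
            (Real.sqrt_sq (norm_nonneg _)).symm
        _ = Real.sqrt (‖latt n - c‖^2) := by rw [heq]
        _ = ‖latt n - c‖ := Real.sqrt_sq (norm_nonneg _)
    have hswap : ∑ n ∈ F₂, 1/(1+‖latt n - c‖)^4
        = ∑ m ∈ F₂.image Prod.swap, 1/(1+‖latt m - c'‖)^4 := by
      rw [Finset.sum_image (by
        intro a _ b _ h
        exact Prod.swap_injective h)]
      apply Finset.sum_congr rfl
      intro n _
      have : Prod.swap n = (n.2, n.1) := rfl
      rw [this, hnorm n]
    rw [hswap]
    apply K4half _ c' R hR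
    intro m hm
    rw [Finset.mem_image] at hm
    obtain ⟨n, hn, rfl⟩ := hm
    rw [hF₂def, Finset.mem_filter] at hn
    have hswapn : Prod.swap n = (n.2, n.1) := rfl
    constructor
    · rw [hswapn, hnorm n]
      exact hF n hn.1
    · rw [hswapn, hc'0, hc'1]
      dsimp only
      linarith [lt_of_not_ge hn.2]
  refine le_trans (add_le_add h1 h2) ?_
  rw [← add_div]
  norm_num

private lemma inv3_le {p q r P Q R' : ℝ} (hP : 0 < P) (hQ : 0 < Q) (hR : 0 < R')
    (h1 : P ≤ p) (h2 : Q ≤ q) (h3 : R' ≤ r) : 1/(p*q*r) ≤ 1/(P*Q*R') := by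
  have hp : 0 < p := lt_of_lt_of_le hP h1
  have hq : 0 < q := lt_of_lt_of_le hQ h2
  apply one_div_le_one_div_of_le (by positivity)
  calc P*Q*R' ≤ p*q*R' := by
        apply mul_le_mul_of_nonneg_right _ hR.le
        exact mul_le_mul h1 h2 hQ.le hp.le
    _ ≤ p*q*r := by
        apply mul_le_mul_of_nonneg_left h3 (by positivity)

set_option maxHeartbeats 2000000 in
theorem covariance_full_sum_estimate :
    ∃ C : ℝ, ∀ x y : E2, ‖x‖ ≤ ‖y‖ → ‖y‖ / 2 ≤ ‖x - y‖ →
      (∑' n : ℤ × ℤ,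
          1 / ((1 + ‖x - latt n‖) * (1 + ‖y - latt n‖) * (1 + ‖latt n‖) ^ 2)) ≤
        C * Real.log (Real.exp 1 + ‖x - y‖) / ((1 + ‖x‖) * (1 + ‖y‖)) := by
  classical
  refine ⟨10000, ?_⟩
  intro x y hxy hd2
  have ha : (0:ℝ) ≤ ‖x‖ := norm_nonneg x
  have hb : (0:ℝ) ≤ ‖y‖ := norm_nonneg y
  have hd0 : (0:ℝ) ≤ ‖x - y‖ := norm_nonneg _
  have hbd : ‖y‖ ≤ 2*‖x - y‖ := by linarith
  have had : ‖x‖ ≤ 2*‖x - y‖ := le_trans hxy hbd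
  have hA : (0:ℝ) < 1+‖x‖ := by linarith
  have hB : (0:ℝ) < 1+‖y‖ := by linarith
  have hA0 : (1+‖x‖) ≠ 0 := ne_of_gt hA
  have hB0 : (1+‖y‖) ≠ 0 := ne_of_gt hB
  have hL1 : (1:ℝ) ≤ Real.log (Real.exp 1 + ‖x - y‖) := by
    calc (1:ℝ) = Real.log (Real.exp 1) := (Real.log_exp 1).symm
      _ ≤ Real.log (Real.exp 1 + ‖x - y‖) :=
          Real.log_le_log (Real.exp_pos 1) (by linarith)
  have hfrac : (0:ℝ) ≤ Real.log (Real.exp 1 + ‖x - y‖)/((1+‖x‖)*(1+‖y‖)) :=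
    div_nonneg (by linarith) (by positivity)
  have hdivD : ∀ u v : ℝ, u ≤ v → u/((1+‖x‖)*(1+‖y‖)) ≤ v/((1+‖x‖)*(1+‖y‖)) := by
    intro u v huv
    rw [div_le_div_iff₀ (by positivity) (by positivity)]
    exact mul_le_mul_of_nonneg_right huv (by positivity)
  have hlog_mono : ∀ u v : ℝ, 0 ≤ u → u ≤ v →
      Real.log (Real.exp 1 + u) ≤ Real.log (Real.exp 1 + v) := by
    intro u v hu huv
    exact Real.log_le_log (by positivity) (by linarith)
  have hla2 : Real.log (Real.exp 1 + ‖x‖/2) ≤ Real.log (Real.exp 1 + ‖x - y‖) :=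
    hlog_mono _ _ (by linarith) (by linarith)
  have hla4 : Real.log (Real.exp 1 + ‖x‖/4) ≤ Real.log (Real.exp 1 + ‖x - y‖) :=
    hlog_mono _ _ (by linarith) (by linarith)
  have hlb4 : Real.log (Real.exp 1 + ‖y‖/4) ≤ Real.log (Real.exp 1 + ‖x - y‖) :=
    hlog_mono _ _ (by linarith) (by linarith)
  have he : (2.7182818283:ℝ) < Real.exp 1 := Real.exp_one_gt_d9
  have hdouble : ∀ u : ℝ, 0 ≤ u → u ≤ 4*‖x - y‖ →
      Real.log (Real.exp 1 + u) ≤ 2 * Real.log (Real.exp 1 + ‖x - y‖) := by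
    intro u hu h4
    have h1 : Real.exp 1 + u ≤ (Real.exp 1 + ‖x - y‖)^2 := by
      nlinarith [he, hd0, sq_nonneg ‖x - y‖]
    calc Real.log (Real.exp 1 + u) ≤ Real.log ((Real.exp 1 + ‖x - y‖)^2) :=
          Real.log_le_log (by positivity) h1
      _ = 2 * Real.log (Real.exp 1 + ‖x - y‖) := by
          rw [Real.log_pow]; push_cast; ring
  have hl2a : Real.log (Real.exp 1 + 2*‖x‖) ≤ 2 * Real.log (Real.exp 1 + ‖x - y‖) :=
    hdouble _ (by linarith) (by linarith)
  have hl2b : Real.log (Real.exp 1 + 2*‖y‖) ≤ 2 * Real.log (Real.exp 1 + ‖x - y‖) :=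
    hdouble _ (by linarith) (by linarith)
  have hRHS0 : (0:ℝ) ≤ 10000 * Real.log (Real.exp 1 + ‖x - y‖) / ((1 + ‖x‖) * (1 + ‖y‖)) := by
    rw [mul_div_assoc]
    nlinarith [hfrac]
  apply tsum_le_of_sum_le' hRHS0
  intro s
  rw [mul_div_assoc]
  set f : ℤ × ℤ → ℝ :=
    fun n => 1 / ((1 + ‖x - latt n‖) * (1 + ‖y - latt n‖) * (1 + ‖latt n‖) ^ 2) with hfdef
  set s1 := s.filter (fun n : ℤ × ℤ => ¬ ‖latt n‖ ≤ ‖x‖/2) with hs1def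
  set s2 := s1.filter (fun n : ℤ × ℤ => ¬ 2*‖y‖ ≤ ‖latt n‖) with hs2def
  set s3 := s2.filter (fun n : ℤ × ℤ => ¬ ‖latt n - x‖ ≤ ‖x‖/4) with hs3def
  set s4 := s3.filter (fun n : ℤ × ℤ => ¬ ‖latt n - y‖ ≤ ‖y‖/4) with hs4def
  set s5 := s4.filter (fun n : ℤ × ℤ => ¬ ‖latt n‖ ≤ 2*‖x‖) with hs5def
  have e0 : ∑ n ∈ s, f n
      = ∑ n ∈ s.filter (fun n : ℤ × ℤ => ‖latt n‖ ≤ ‖x‖/2), f n + ∑ n ∈ s1, f n :=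
    (Finset.sum_filter_add_sum_filter_not s _ f).symm
  have e1 : ∑ n ∈ s1, f n
      = ∑ n ∈ s1.filter (fun n : ℤ × ℤ => 2*‖y‖ ≤ ‖latt n‖), f n + ∑ n ∈ s2, f n :=
    (Finset.sum_filter_add_sum_filter_not s1 _ f).symm
  have e2 : ∑ n ∈ s2, f n
      = ∑ n ∈ s2.filter (fun n : ℤ × ℤ => ‖latt n - x‖ ≤ ‖x‖/4), f n + ∑ n ∈ s3, f n :=
    (Finset.sum_filter_add_sum_filter_not s2 _ f).symm
  have e3 : ∑ n ∈ s3, f n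
      = ∑ n ∈ s3.filter (fun n : ℤ × ℤ => ‖latt n - y‖ ≤ ‖y‖/4), f n + ∑ n ∈ s4, f n :=
    (Finset.sum_filter_add_sum_filter_not s3 _ f).symm
  have e4 : ∑ n ∈ s4, f n
      = ∑ n ∈ s4.filter (fun n : ℤ × ℤ => ‖latt n‖ ≤ 2*‖x‖), f n + ∑ n ∈ s5, f n :=
    (Finset.sum_filter_add_sum_filter_not s4 _ f).symm
  -- Region 1 : ‖latt n‖ ≤ ‖x‖/2
  have hT1 : ∑ n ∈ s.filter (fun n : ℤ × ℤ => ‖latt n‖ ≤ ‖x‖/2), f n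
      ≤ 288 * (Real.log (Real.exp 1 + ‖x - y‖)/((1+‖x‖)*(1+‖y‖))) := by
    set t := s.filter (fun n : ℤ × ℤ => ‖latt n‖ ≤ ‖x‖/2) with htdef
    have hmem : ∀ n ∈ t, ‖latt n - (0:E2)‖ ≤ ‖x‖/2 := by
      intro n hn
      rw [htdef, Finset.mem_filter] at hn
      rw [sub_zero]
      exact hn.2
    have hpt : ∀ n ∈ t, f n ≤ (4/((1+‖x‖)*(1+‖y‖))) * (1/(1+‖latt n‖)^2) := by
      intro n hn
      rw [htdef, Finset.mem_filter] at hn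
      have hq : ‖latt n‖ ≤ ‖x‖/2 := hn.2
      have ht1 := norm_sub_norm_le x (latt n)
      have ht2 := norm_sub_norm_le y (latt n)
      have hx1 : (1+‖x‖)/2 ≤ 1+‖x - latt n‖ := by linarith
      have hy1 : (1+‖y‖)/2 ≤ 1+‖y - latt n‖ := by linarith
      have key : f n ≤ 1/((1+‖x‖)/2 * ((1+‖y‖)/2) * (1+‖latt n‖)^2) :=
        inv3_le (by positivity) (by positivity) (by positivity) hx1 hy1 (le_refl _)
      have heq : 1/((1+‖x‖)/2 * ((1+‖y‖)/2) * (1+‖latt n‖)^2)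
          = (4/((1+‖x‖)*(1+‖y‖))) * (1/(1+‖latt n‖)^2) := by
        have hT0 : (1+‖latt n‖) ≠ 0 := by positivity
        field_simp
        try ring
      rw [heq] at key
      exact key
    have hK := Ksq t (0:E2) (‖x‖/2) (by positivity) hmem
    simp only [sub_zero] at hK
    calc ∑ n ∈ t, f n
        ≤ ∑ n ∈ t, (4/((1+‖x‖)*(1+‖y‖))) * (1/(1+‖latt n‖)^2) := Finset.sum_le_sum hpt
      _ = (4/((1+‖x‖)*(1+‖y‖))) * ∑ n ∈ t, 1/(1+‖latt n‖)^2 := by rw [Finset.mul_sum]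
      _ ≤ (4/((1+‖x‖)*(1+‖y‖))) * (72 * Real.log (Real.exp 1 + ‖x‖/2)) := by
          apply mul_le_mul_of_nonneg_left hK (by positivity)
      _ = 288 * (Real.log (Real.exp 1 + ‖x‖/2)/((1+‖x‖)*(1+‖y‖))) := by ring
      _ ≤ 288 * (Real.log (Real.exp 1 + ‖x - y‖)/((1+‖x‖)*(1+‖y‖))) :=
          mul_le_mul_of_nonneg_left (hdivD _ _ hla2) (by norm_num)
  -- Region 2 : 2‖y‖ ≤ ‖latt n‖
  have hT2 : ∑ n ∈ s1.filter (fun n : ℤ × ℤ => 2*‖y‖ ≤ ‖latt n‖), f n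
      ≤ 4608 * (Real.log (Real.exp 1 + ‖x - y‖)/((1+‖x‖)*(1+‖y‖))) := by
    set t := s1.filter (fun n : ℤ × ℤ => 2*‖y‖ ≤ ‖latt n‖) with htdef
    have hmem : ∀ n ∈ t, 2*‖y‖ ≤ ‖latt n - (0:E2)‖ := by
      intro n hn
      rw [htdef, Finset.mem_filter] at hn
      rw [sub_zero]
      exact hn.2
    have hpt : ∀ n ∈ t, f n ≤ 4 * (1/(1+‖latt n‖)^4) := by
      intro n hn
      rw [htdef, Finset.mem_filter] at hn
      have hq : 2*‖y‖ ≤ ‖latt n‖ := hn.2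
      have ht1 : ‖latt n‖ - ‖x‖ ≤ ‖x - latt n‖ := by
        rw [norm_sub_rev]
        exact norm_sub_norm_le (latt n) x
      have ht2 : ‖latt n‖ - ‖y‖ ≤ ‖y - latt n‖ := by
        rw [norm_sub_rev]
        exact norm_sub_norm_le (latt n) y
      have hx1 : (1+‖latt n‖)/2 ≤ 1+‖x - latt n‖ := by linarith
      have hy1 : (1+‖latt n‖)/2 ≤ 1+‖y - latt n‖ := by linarith
      have key : f n ≤ 1/((1+‖latt n‖)/2 * ((1+‖latt n‖)/2) * (1+‖latt n‖)^2) :=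
        inv3_le (by positivity) (by positivity) (by positivity) hx1 hy1 (le_refl _)
      have heq : 1/((1+‖latt n‖)/2 * ((1+‖latt n‖)/2) * (1+‖latt n‖)^2)
          = 4 * (1/(1+‖latt n‖)^4) := by
        have hT0 : (1+‖latt n‖) ≠ 0 := by positivity
        field_simp
        try ring
      rw [heq] at key
      exact key
    have hK := K4 t (0:E2) (2*‖y‖) (by positivity) hmem
    simp only [sub_zero] at hK
    calc ∑ n ∈ t, f n
        ≤ ∑ n ∈ t, 4 * (1/(1+‖latt n‖)^4) := Finset.sum_le_sum hpt
      _ = 4 * ∑ n ∈ t, 1/(1+‖latt n‖)^4 := by rw [Finset.mul_sum]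
      _ ≤ 4 * (1152/(1+2*‖y‖)^2) := by
          apply mul_le_mul_of_nonneg_left hK (by norm_num)
      _ = 4608/(1+2*‖y‖)^2 := by ring
      _ ≤ 4608/((1+‖x‖)*(1+‖y‖)) := by
          rw [div_le_div_iff₀ (by positivity) (by positivity)]
          nlinarith [hxy, ha, hb]
      _ = 4608 * (1/((1+‖x‖)*(1+‖y‖))) := by ring
      _ ≤ 4608 * (Real.log (Real.exp 1 + ‖x - y‖)/((1+‖x‖)*(1+‖y‖))) :=
          mul_le_mul_of_nonneg_left (hdivD _ _ hL1) (by norm_num)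
  -- Region 3 : ‖latt n - x‖ ≤ ‖x‖/4
  have hT3 : ∑ n ∈ s2.filter (fun n : ℤ × ℤ => ‖latt n - x‖ ≤ ‖x‖/4), f n
      ≤ 171 * (Real.log (Real.exp 1 + ‖x - y‖)/((1+‖x‖)*(1+‖y‖))) := by
    set t := s2.filter (fun n : ℤ × ℤ => ‖latt n - x‖ ≤ ‖x‖/4) with htdef
    have hmem : ∀ n ∈ t, ‖latt n - x‖ ≤ ‖x‖/4 := by
      intro n hn
      rw [htdef, Finset.mem_filter] at hn
      exact hn.2
    have hpt : ∀ n ∈ t, f n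
        ≤ (64/(9*(1+‖x‖)^2*(1+‖y‖))) * (1/(1+‖latt n - x‖)) := by
      intro n hn
      have hq : ‖latt n - x‖ ≤ ‖x‖/4 := hmem n hn
      have htri : ‖x - y‖ ≤ ‖x - latt n‖ + ‖latt n - y‖ := by
        have hxyeq : x - y = (x - latt n) + (latt n - y) := by abel
        rw [hxyeq]
        exact norm_add_le _ _
      have hrev1 : ‖x - latt n‖ = ‖latt n - x‖ := norm_sub_rev x (latt n)
      have hrev2 : ‖latt n - y‖ = ‖y - latt n‖ := norm_sub_rev (latt n) y
      have ht1 := norm_sub_norm_le x (latt n)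
      -- lower bound on ‖latt n‖
      have hn1 : ‖x‖ - ‖x‖/4 ≤ ‖latt n‖ := by
        have : ‖x‖ - ‖latt n‖ ≤ ‖latt n - x‖ := by rw [← hrev1]; exact ht1
        linarith
      have hx1 : 1+‖latt n - x‖ ≤ 1+‖x - latt n‖ := by rw [hrev1]
      have hy1 : (1+‖y‖)/4 ≤ 1+‖y - latt n‖ := by
        have h1 : ‖x - y‖ - ‖x‖/4 ≤ ‖y - latt n‖ := by
          rw [← hrev2]
          linarith [htri, hq, hrev1]
        linarith [hd2, hbd, had]
      have hr1 : ((3/4)*(1+‖x‖))^2 ≤ (1+‖latt n‖)^2 := by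
        apply pow_le_pow_left₀ (by positivity)
        linarith
      have key : f n ≤ 1/((1+‖latt n - x‖) * ((1+‖y‖)/4) * (((3/4)*(1+‖x‖))^2)) :=
        inv3_le (by positivity) (by positivity) (by positivity) hx1 hy1 hr1
      have heq : 1/((1+‖latt n - x‖) * ((1+‖y‖)/4) * (((3/4)*(1+‖x‖))^2))
          = (64/(9*(1+‖x‖)^2*(1+‖y‖))) * (1/(1+‖latt n - x‖)) := by
        have hp0 : (1+‖latt n - x‖) ≠ 0 := by positivity
        field_simp
        try ring
      rw [heq] at key
      exact key
    have hK := Kone t x (‖x‖/4) (by positivity) hmem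
    have hlogpos : (0:ℝ) ≤ Real.log (Real.exp 1 + ‖x‖/4) := by
      apply Real.log_nonneg
      nlinarith [he]
    calc ∑ n ∈ t, f n
        ≤ ∑ n ∈ t, (64/(9*(1+‖x‖)^2*(1+‖y‖))) * (1/(1+‖latt n - x‖)) :=
          Finset.sum_le_sum hpt
      _ = (64/(9*(1+‖x‖)^2*(1+‖y‖))) * ∑ n ∈ t, 1/(1+‖latt n - x‖) := by
          rw [Finset.mul_sum]
      _ ≤ (64/(9*(1+‖x‖)^2*(1+‖y‖))) * (24*(1+‖x‖/4)*Real.log (Real.exp 1 + ‖x‖/4)) := by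
          apply mul_le_mul_of_nonneg_left hK (by positivity)
      _ ≤ (64/(9*(1+‖x‖)^2*(1+‖y‖)))
            * (24*(1+‖x‖)*Real.log (Real.exp 1 + ‖x - y‖)) := by
          apply mul_le_mul_of_nonneg_left _ (by positivity)
          calc 24*(1+‖x‖/4)*Real.log (Real.exp 1 + ‖x‖/4)
              ≤ 24*(1+‖x‖)*Real.log (Real.exp 1 + ‖x‖/4) := by
                apply mul_le_mul_of_nonneg_right _ hlogpos
                linarith
            _ ≤ 24*(1+‖x‖)*Real.log (Real.exp 1 + ‖x - y‖) := by
                apply mul_le_mul_of_nonneg_left hla4 (by positivity)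
      _ = (512/3) * (Real.log (Real.exp 1 + ‖x - y‖)/((1+‖x‖)*(1+‖y‖))) := by
          field_simp
          try ring
      _ ≤ 171 * (Real.log (Real.exp 1 + ‖x - y‖)/((1+‖x‖)*(1+‖y‖))) := by
          apply mul_le_mul_of_nonneg_right (by norm_num) hfrac
  -- Region 4 : ‖latt n - y‖ ≤ ‖y‖/4
  have hT4 : ∑ n ∈ s3.filter (fun n : ℤ × ℤ => ‖latt n - y‖ ≤ ‖y‖/4), f n
      ≤ 171 * (Real.log (Real.exp 1 + ‖x - y‖)/((1+‖x‖)*(1+‖y‖))) := by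
    set t := s3.filter (fun n : ℤ × ℤ => ‖latt n - y‖ ≤ ‖y‖/4) with htdef
    have hmem : ∀ n ∈ t, ‖latt n - y‖ ≤ ‖y‖/4 := by
      intro n hn
      rw [htdef, Finset.mem_filter] at hn
      exact hn.2
    have hpt : ∀ n ∈ t, f n
        ≤ (64/(9*(1+‖y‖)^2*(1+‖x‖))) * (1/(1+‖latt n - y‖)) := by
      intro n hn
      have hq : ‖latt n - y‖ ≤ ‖y‖/4 := hmem n hn
      have htri : ‖x - y‖ ≤ ‖x - latt n‖ + ‖latt n - y‖ := by
        have hxyeq : x - y = (x - latt n) + (latt n - y) := by abel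
        rw [hxyeq]
        exact norm_add_le _ _
      have hrev2 : ‖latt n - y‖ = ‖y - latt n‖ := norm_sub_rev (latt n) y
      have ht2 := norm_sub_norm_le y (latt n)
      have hn1 : ‖y‖ - ‖y‖/4 ≤ ‖latt n‖ := by
        have : ‖y‖ - ‖latt n‖ ≤ ‖latt n - y‖ := by
          rw [hrev2]
          exact ht2
        linarith
      have hx1 : (1+‖x‖)/4 ≤ 1+‖x - latt n‖ := by
        have h1 : ‖x - y‖ - ‖y‖/4 ≤ ‖x - latt n‖ := by linarith [htri, hq]
        linarith [hd2, had]
      have hy1 : 1+‖latt n - y‖ ≤ 1+‖y - latt n‖ := by rw [hrev2]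
      have hr1 : ((3/4)*(1+‖y‖))^2 ≤ (1+‖latt n‖)^2 := by
        apply pow_le_pow_left₀ (by positivity)
        linarith
      have key : f n ≤ 1/(((1+‖x‖)/4) * (1+‖latt n - y‖) * (((3/4)*(1+‖y‖))^2)) :=
        inv3_le (by positivity) (by positivity) (by positivity) hx1 hy1 hr1
      have heq : 1/(((1+‖x‖)/4) * (1+‖latt n - y‖) * (((3/4)*(1+‖y‖))^2))
          = (64/(9*(1+‖y‖)^2*(1+‖x‖))) * (1/(1+‖latt n - y‖)) := by
        have hp0 : (1+‖latt n - y‖) ≠ 0 := by positivity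
        field_simp
        try ring
      rw [heq] at key
      exact key
    have hK := Kone t y (‖y‖/4) (by positivity) hmem
    have hlogpos : (0:ℝ) ≤ Real.log (Real.exp 1 + ‖y‖/4) := by
      apply Real.log_nonneg
      nlinarith [he]
    calc ∑ n ∈ t, f n
        ≤ ∑ n ∈ t, (64/(9*(1+‖y‖)^2*(1+‖x‖))) * (1/(1+‖latt n - y‖)) :=
          Finset.sum_le_sum hpt
      _ = (64/(9*(1+‖y‖)^2*(1+‖x‖))) * ∑ n ∈ t, 1/(1+‖latt n - y‖) := by
          rw [Finset.mul_sum]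
      _ ≤ (64/(9*(1+‖y‖)^2*(1+‖x‖))) * (24*(1+‖y‖/4)*Real.log (Real.exp 1 + ‖y‖/4)) := by
          apply mul_le_mul_of_nonneg_left hK (by positivity)
      _ ≤ (64/(9*(1+‖y‖)^2*(1+‖x‖)))
            * (24*(1+‖y‖)*Real.log (Real.exp 1 + ‖x - y‖)) := by
          apply mul_le_mul_of_nonneg_left _ (by positivity)
          calc 24*(1+‖y‖/4)*Real.log (Real.exp 1 + ‖y‖/4)
              ≤ 24*(1+‖y‖)*Real.log (Real.exp 1 + ‖y‖/4) := by
                apply mul_le_mul_of_nonneg_right _ hlogpos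
                linarith
            _ ≤ 24*(1+‖y‖)*Real.log (Real.exp 1 + ‖x - y‖) := by
                apply mul_le_mul_of_nonneg_left hlb4 (by positivity)
      _ = (512/3) * (Real.log (Real.exp 1 + ‖x - y‖)/((1+‖x‖)*(1+‖y‖))) := by
          field_simp
          try ring
      _ ≤ 171 * (Real.log (Real.exp 1 + ‖x - y‖)/((1+‖x‖)*(1+‖y‖))) := by
          apply mul_le_mul_of_nonneg_right (by norm_num) hfrac
  -- Region 5a : remaining, ‖latt n‖ ≤ 2‖x‖
  have hT5 : ∑ n ∈ s4.filter (fun n : ℤ × ℤ => ‖latt n‖ ≤ 2*‖x‖), f n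
      ≤ 2304 * (Real.log (Real.exp 1 + ‖x - y‖)/((1+‖x‖)*(1+‖y‖))) := by
    set t := s4.filter (fun n : ℤ × ℤ => ‖latt n‖ ≤ 2*‖x‖) with htdef
    have hmemfacts : ∀ n ∈ t,
        ¬ ‖latt n - x‖ ≤ ‖x‖/4 ∧ ¬ ‖latt n - y‖ ≤ ‖y‖/4 ∧ ‖latt n‖ ≤ 2*‖x‖ := by
      intro n hn
      rw [htdef, Finset.mem_filter] at hn
      obtain ⟨hn4, h5⟩ := hn
      rw [hs4def, Finset.mem_filter] at hn4
      obtain ⟨hn3, h4⟩ := hn4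
      rw [hs3def, Finset.mem_filter] at hn3
      exact ⟨hn3.2, h4, h5⟩
    have hmem : ∀ n ∈ t, ‖latt n - (0:E2)‖ ≤ 2*‖x‖ := by
      intro n hn
      rw [sub_zero]
      exact (hmemfacts n hn).2.2
    have hpt : ∀ n ∈ t, f n ≤ (16/((1+‖x‖)*(1+‖y‖))) * (1/(1+‖latt n‖)^2) := by
      intro n hn
      obtain ⟨h3, h4, _⟩ := hmemfacts n hn
      have hq3 : ‖x‖/4 < ‖latt n - x‖ := lt_of_not_ge h3
      have hq4 : ‖y‖/4 < ‖latt n - y‖ := lt_of_not_ge h4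
      have hrev1 : ‖x - latt n‖ = ‖latt n - x‖ := norm_sub_rev x (latt n)
      have hrev2 : ‖y - latt n‖ = ‖latt n - y‖ := norm_sub_rev y (latt n)
      have hx1 : (1+‖x‖)/4 ≤ 1+‖x - latt n‖ := by rw [hrev1]; linarith
      have hy1 : (1+‖y‖)/4 ≤ 1+‖y - latt n‖ := by rw [hrev2]; linarith
      have key : f n ≤ 1/(((1+‖x‖)/4) * ((1+‖y‖)/4) * (1+‖latt n‖)^2) :=
        inv3_le (by positivity) (by positivity) (by positivity) hx1 hy1 (le_refl _)
      have heq : 1/(((1+‖x‖)/4) * ((1+‖y‖)/4) * (1+‖latt n‖)^2)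
          = (16/((1+‖x‖)*(1+‖y‖))) * (1/(1+‖latt n‖)^2) := by
        have hT0 : (1+‖latt n‖) ≠ 0 := by positivity
        field_simp
        try ring
      rw [heq] at key
      exact key
    have hK := Ksq t (0:E2) (2*‖x‖) (by positivity) hmem
    simp only [sub_zero] at hK
    calc ∑ n ∈ t, f n
        ≤ ∑ n ∈ t, (16/((1+‖x‖)*(1+‖y‖))) * (1/(1+‖latt n‖)^2) := Finset.sum_le_sum hpt
      _ = (16/((1+‖x‖)*(1+‖y‖))) * ∑ n ∈ t, 1/(1+‖latt n‖)^2 := by rw [Finset.mul_sum]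
      _ ≤ (16/((1+‖x‖)*(1+‖y‖))) * (72 * Real.log (Real.exp 1 + 2*‖x‖)) := by
          apply mul_le_mul_of_nonneg_left hK (by positivity)
      _ ≤ (16/((1+‖x‖)*(1+‖y‖))) * (144 * Real.log (Real.exp 1 + ‖x - y‖)) := by
          apply mul_le_mul_of_nonneg_left _ (by positivity)
          linarith [hl2a]
      _ = 2304 * (Real.log (Real.exp 1 + ‖x - y‖)/((1+‖x‖)*(1+‖y‖))) := by ring
  -- Region 5b : the remainder s5
  have hT6 : ∑ n ∈ s5, f n
      ≤ 1152 * (Real.log (Real.exp 1 + ‖x - y‖)/((1+‖x‖)*(1+‖y‖))) := by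
    have hmemfacts : ∀ n ∈ s5,
        ¬ 2*‖y‖ ≤ ‖latt n‖ ∧ ¬ ‖latt n - y‖ ≤ ‖y‖/4 ∧ ¬ ‖latt n‖ ≤ 2*‖x‖ := by
      intro n hn
      rw [hs5def, Finset.mem_filter] at hn
      obtain ⟨hn4, h5⟩ := hn
      rw [hs4def, Finset.mem_filter] at hn4
      obtain ⟨hn3, h4⟩ := hn4
      rw [hs3def, Finset.mem_filter] at hn3
      obtain ⟨hn2, _⟩ := hn3
      rw [hs2def, Finset.mem_filter] at hn2
      exact ⟨hn2.2, h4, h5⟩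
    have hmem : ∀ n ∈ s5, ‖latt n - (0:E2)‖ ≤ 2*‖y‖ := by
      intro n hn
      rw [sub_zero]
      exact le_of_lt (lt_of_not_ge (hmemfacts n hn).1)
    have hpt : ∀ n ∈ s5, f n ≤ (8/((1+‖x‖)*(1+‖y‖))) * (1/(1+‖latt n‖)^2) := by
      intro n hn
      obtain ⟨h2, h4, h5⟩ := hmemfacts n hn
      have hq4 : ‖y‖/4 < ‖latt n - y‖ := lt_of_not_ge h4
      have hq5 : 2*‖x‖ < ‖latt n‖ := lt_of_not_ge h5
      have hrev2 : ‖y - latt n‖ = ‖latt n - y‖ := norm_sub_rev y (latt n)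
      have ht1 : ‖latt n‖ - ‖x‖ ≤ ‖x - latt n‖ := by
        rw [norm_sub_rev]
        exact norm_sub_norm_le (latt n) x
      have hx1 : (1+‖latt n‖)/2 ≤ 1+‖x - latt n‖ := by linarith
      have hy1 : (1+‖y‖)/4 ≤ 1+‖y - latt n‖ := by rw [hrev2]; linarith
      have key : f n ≤ 1/(((1+‖latt n‖)/2) * ((1+‖y‖)/4) * (1+‖latt n‖)^2) :=
        inv3_le (by positivity) (by positivity) (by positivity) hx1 hy1 (le_refl _)
      have heq : 1/(((1+‖latt n‖)/2) * ((1+‖y‖)/4) * (1+‖latt n‖)^2)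
          = (8/(1+‖y‖)) * (1/(1+‖latt n‖)^3) := by
        have hT0 : (1+‖latt n‖) ≠ 0 := by positivity
        field_simp
        try ring
      rw [heq] at key
      have hstep : (8/(1+‖y‖)) * (1/(1+‖latt n‖)^3)
          ≤ (8/((1+‖x‖)*(1+‖y‖))) * (1/(1+‖latt n‖)^2) := by
        have e1 : (8:ℝ)/(1+‖y‖) * (1/(1+‖latt n‖)^3) = 8/((1+‖y‖)*(1+‖latt n‖)^3) := by
          rw [div_mul_div_comm, mul_one]
        have e2 : (8:ℝ)/((1+‖x‖)*(1+‖y‖)) * (1/(1+‖latt n‖)^2)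
            = 8/((1+‖x‖)*(1+‖y‖)*(1+‖latt n‖)^2) := by
          rw [div_mul_div_comm, mul_one]
        rw [e1, e2]
        apply div_le_div_of_nonneg_left (by norm_num) (by positivity)
        have h6 : (1:ℝ)+‖x‖ ≤ 1+‖latt n‖ := by linarith
        nlinarith [mul_nonneg (mul_nonneg hB.le (sq_nonneg (1+‖latt n‖))) (sub_nonneg.mpr h6)]
      exact le_trans key hstep
    have hK := Ksq s5 (0:E2) (2*‖y‖) (by positivity) hmem
    simp only [sub_zero] at hK
    calc ∑ n ∈ s5, f n
        ≤ ∑ n ∈ s5, (8/((1+‖x‖)*(1+‖y‖))) * (1/(1+‖latt n‖)^2) := Finset.sum_le_sum hpt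
      _ = (8/((1+‖x‖)*(1+‖y‖))) * ∑ n ∈ s5, 1/(1+‖latt n‖)^2 := by rw [Finset.mul_sum]
      _ ≤ (8/((1+‖x‖)*(1+‖y‖))) * (72 * Real.log (Real.exp 1 + 2*‖y‖)) := by
          apply mul_le_mul_of_nonneg_left hK (by positivity)
      _ ≤ (8/((1+‖x‖)*(1+‖y‖))) * (144 * Real.log (Real.exp 1 + ‖x - y‖)) := by
          apply mul_le_mul_of_nonneg_left _ (by positivity)
          linarith [hl2b]
      _ = 1152 * (Real.log (Real.exp 1 + ‖x - y‖)/((1+‖x‖)*(1+‖y‖))) := by ring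
  calc ∑ n ∈ s, f n
      = ∑ n ∈ s.filter (fun n : ℤ × ℤ => ‖latt n‖ ≤ ‖x‖/2), f n
        + ∑ n ∈ s1.filter (fun n : ℤ × ℤ => 2*‖y‖ ≤ ‖latt n‖), f n
        + ∑ n ∈ s2.filter (fun n : ℤ × ℤ => ‖latt n - x‖ ≤ ‖x‖/4), f n
        + ∑ n ∈ s3.filter (fun n : ℤ × ℤ => ‖latt n - y‖ ≤ ‖y‖/4), f n
        + ∑ n ∈ s4.filter (fun n : ℤ × ℤ => ‖latt n‖ ≤ 2*‖x‖), f n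
        + ∑ n ∈ s5, f n := by linarith [e0, e1, e2, e3, e4]
    _ ≤ 8694 * (Real.log (Real.exp 1 + ‖x - y‖)/((1+‖x‖)*(1+‖y‖))) := by
        linarith [hT1, hT2, hT3, hT4, hT5, hT6]
    _ ≤ 10000 * (Real.log (Real.exp 1 + ‖x - y‖)/((1+‖x‖)*(1+‖y‖))) := by
        apply mul_le_mul_of_nonneg_right (by norm_num) hfrac
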